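/- For every θ ∈ [0, π], with τ₀ = cos(θ/2)e₀ + sin(θ/2)e₁, τ₁ = sin(θ/2)e₀ + cos(θ/2)e₁, Σ'₁ = (1/√2)(e₀ ⊗ τ₀ + e₁ ⊗ τ₁), and Σ'₂ = (1/√2)(e₀ ⊗ τ₁ + e₁ ⊗ τ₀), the equal mixture κ'(1/2) = (1/2)|Σ'₁⟩⟨Σ'₁| + (1/2)|Σ'₂⟩⟨Σ'₂| IS separable. (Indeed Σ'₁ + Σ'₂ and Σ'₁ − Σ'₂ are proportional to product vectors, so κ'(1/2) is a convex combination of projections onto product vectors.) -/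

import Mathlib

open Matrix Kronecker Polynomial ComplexOrder

noncomputable section

/-- Partial trace over the first subsystem of a two-qubit (4×4) matrix. -/
def ptr1 (M : Matrix (Fin 2 × Fin 2) (Fin 2 × Fin 2) ℂ) : Matrix (Fin 2) (Fin 2) ℂ :=
  Matrix.of fun j l => ∑ i, M (i, j) (i, l)

/-- Partial trace over the second subsystem of a two-qubit (4×4) matrix. -/
def ptr2 (M : Matrix (Fin 2 × Fin 2) (Fin 2 × Fin 2) ℂ) : Matrix (Fin 2) (Fin 2) ℂ :=
  Matrix.of fun i k => ∑ j, M (i, j) (k, j)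

/-- Rank-one projection |v⟩⟨v| of a qubit vector. -/
def proj2 (v : Fin 2 → ℂ) : Matrix (Fin 2) (Fin 2) ℂ :=
  Matrix.of fun i j => v i * star (v j)

/-- Rank-one projection |v⟩⟨v| of a two-qubit vector. -/
def proj4 (v : Fin 2 × Fin 2 → ℂ) : Matrix (Fin 2 × Fin 2) (Fin 2 × Fin 2) ℂ :=
  Matrix.of fun p q => v p * star (v q)

/-- Kronecker (tensor) product of two qubit vectors. -/
def tens (a b : Fin 2 → ℂ) : Fin 2 × Fin 2 → ℂ := fun p => a p.1 * b p.2

/-- Unit (normalized) vector. -/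
def UnitVec {α : Type*} [Fintype α] (v : α → ℂ) : Prop := ∑ i, v i * star (v i) = 1

/-- Hermitian inner product of two-qubit vectors. -/
def inner4 (v w : Fin 2 × Fin 2 → ℂ) : ℂ := ∑ p, star (v p) * w p

/-- A 2×2 density matrix: positive semidefinite with unit trace. -/
def IsDensity2 (A : Matrix (Fin 2) (Fin 2) ℂ) : Prop := A.PosSemidef ∧ A.trace = 1

/-- Separability of a two-qubit density matrix: a finite convex combination of
Kronecker products of 2×2 density matrices. -/
def Separable4 (ρ : Matrix (Fin 2 × Fin 2) (Fin 2 × Fin 2) ℂ) : Prop :=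
  ∃ (n : ℕ) (w : Fin n → ℝ) (A B : Fin n → Matrix (Fin 2) (Fin 2) ℂ),
    (∀ i, 0 ≤ w i) ∧ (∑ i, w i = 1) ∧
    (∀ i, IsDensity2 (A i)) ∧ (∀ i, IsDensity2 (B i)) ∧
    ρ = ∑ i, (w i : ℂ) • (A i ⊗ₖ B i)

/-- Standard basis vector e₀ of ℂ². -/
def e₀ : Fin 2 → ℂ := ![1, 0]

/-- Standard basis vector e₁ of ℂ². -/
def e₁ : Fin 2 → ℂ := ![0, 1]

/-- τ₀-type vector: cos(t/2)e₀ + sin(t/2)e₁. -/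
def tau0 (t : ℝ) : Fin 2 → ℂ := ![(Real.cos (t/2) : ℂ), (Real.sin (t/2) : ℂ)]

/-- τ₁-type vector: sin(t/2)e₀ + cos(t/2)e₁. -/
def tau1 (t : ℝ) : Fin 2 → ℂ := ![(Real.sin (t/2) : ℂ), (Real.cos (t/2) : ℂ)]

/-- Σ'₁ = (1/√2)(e₀ ⊗ τ₀ + e₁ ⊗ τ₁). -/
def sig1' (t : ℝ) : Fin 2 × Fin 2 → ℂ :=
  fun q => ((Real.sqrt 2)⁻¹ : ℂ) * (tens e₀ (tau0 t) q + tens e₁ (tau1 t) q)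

/-- Σ'₂ = (1/√2)(e₀ ⊗ τ₁ + e₁ ⊗ τ₀). -/
def sig2' (t : ℝ) : Fin 2 × Fin 2 → ℂ :=
  fun q => ((Real.sqrt 2)⁻¹ : ℂ) * (tens e₀ (tau1 t) q + tens e₁ (tau0 t) q)

/-- The common reduced state: diagonal entries 1/2, off-diagonal entries (sin θ)/2. -/
def redMat (t : ℝ) : Matrix (Fin 2) (Fin 2) ℂ :=
  !![(1/2 : ℂ), ((Real.sin t / 2 : ℝ) : ℂ); ((Real.sin t / 2 : ℝ) : ℂ), (1/2 : ℂ)]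

/-- κ'(p) = p|Σ'₁⟩⟨Σ'₁| + (1−p)|Σ'₂⟩⟨Σ'₂|. -/
def kappa' (t p : ℝ) : Matrix (Fin 2 × Fin 2) (Fin 2 × Fin 2) ℂ :=
  (p : ℂ) • proj4 (sig1' t) + (1 - (p : ℂ)) • proj4 (sig2' t)

lemma c1_star : star (((Real.sqrt 2)⁻¹ : ℂ)) = ((Real.sqrt 2)⁻¹ : ℂ) := by
  rw [Complex.star_def, ← Complex.ofReal_inv, Complex.conj_ofReal]

lemma c1_sq : (((Real.sqrt 2)⁻¹ : ℂ)) * (((Real.sqrt 2)⁻¹ : ℂ)) = 1/2 := by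
  rw [← mul_inv]
  norm_cast
  norm_num [Real.mul_self_sqrt]

lemma proj2_posSemidef (v : Fin 2 → ℂ) : (proj2 v).PosSemidef := by
  refine Matrix.PosSemidef.of_dotProduct_mulVec_nonneg ?_ ?_
  · ext i j
    simp [proj2, Matrix.conjTranspose_apply, mul_comm]
  · intro x
    have h : star x ⬝ᵥ (proj2 v).mulVec x
        = star (∑ i, v i * star (x i)) * (∑ i, v i * star (x i)) := by
      simp [proj2, dotProduct, Matrix.mulVec, Fin.sum_univ_two]
      ring
    rw [h]
    exact star_mul_self_nonneg _

lemma proj4_scale (v : Fin 2 × Fin 2 → ℂ) :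
    proj4 (fun q => ((Real.sqrt 2)⁻¹ : ℂ) * v q) = (1/2 : ℂ) • proj4 v := by
  ext p q
  simp only [proj4, Matrix.smul_apply, Matrix.of_apply, star_mul', c1_star, smul_eq_mul]
  linear_combination (v p * star (v q)) * c1_sq

set_option maxHeartbeats 2000000 in
/-- the equal masked mixture κ'(1/2) is separable for every θ ∈ [0, π]. -/
theorem equal_masked_mixture_of_noncommuting_states_separable
    (θ : ℝ) (hθ : θ ∈ Set.Icc (0 : ℝ) Real.pi) :
    Separable4 (kappa' θ (1/2)) := by
  set c1 : ℂ := ((Real.sqrt 2)⁻¹ : ℂ) with hc1def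
  set vu : Fin 2 → ℂ := ![c1, c1] with hvu
  set vw : Fin 2 → ℂ := ![c1, -c1] with hvw
  refine ⟨2, ![(1 + Real.sin θ)/2, (1 - Real.sin θ)/2],
      ![proj2 vu, proj2 vw], ![proj2 vu, proj2 vw], ?_, ?_, ?_, ?_, ?_⟩
  · intro i
    fin_cases i <;> simp <;> nlinarith [Real.neg_one_le_sin θ, Real.sin_le_one θ]
  · simp [Fin.sum_univ_two]; ring
  · intro i
    fin_cases i <;>
      exact ⟨proj2_posSemidef _, by
        simp [proj2, Matrix.trace, Matrix.diag, Fin.sum_univ_two, hvu, hvw, hc1def, c1_star]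
        linear_combination 2 * c1_sq⟩
  · intro i
    fin_cases i <;>
      exact ⟨proj2_posSemidef _, by
        simp [proj2, Matrix.trace, Matrix.diag, Fin.sum_univ_two, hvu, hvw, hc1def, c1_star]
        linear_combination 2 * c1_sq⟩
  · have h1 : proj4 (sig1' θ) =
        (1/2 : ℂ) • proj4 (fun q => tens e₀ (tau0 θ) q + tens e₁ (tau1 θ) q) :=
      proj4_scale _
    have h2 : proj4 (sig2' θ) =
        (1/2 : ℂ) • proj4 (fun q => tens e₀ (tau1 θ) q + tens e₁ (tau0 θ) q) :=
      proj4_scale _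
    have hsin : ((Real.sin θ : ℝ) : ℂ) =
        2 * ((Real.sin (θ*(1/2)) : ℝ) : ℂ) * ((Real.cos (θ*(1/2)) : ℝ) : ℂ) := by
      have h := Real.sin_two_mul (θ*(1/2))
      rw [show 2 * (θ*(1/2)) = θ by ring] at h
      rw [h]; push_cast; ring
    have hpyth : ((Real.sin (θ*(1/2)) : ℝ) : ℂ)^2 + ((Real.cos (θ*(1/2)) : ℝ) : ℂ)^2 = 1 := by
      have h := Real.sin_sq_add_cos_sq (θ*(1/2))
      norm_cast
    unfold kappa'
    rw [h1, h2]
    ext ⟨i, j⟩ ⟨k, l⟩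
    simp only [Fin.sum_univ_two, Matrix.add_apply, Matrix.smul_apply,
      Matrix.kroneckerMap_apply, proj4, proj2, tens, Matrix.of_apply, smul_eq_mul]
    have hc4 : (((Real.sqrt 2 : ℝ) : ℂ))⁻¹ ^ 4 = 1/4 := by
      have := c1_sq
      rw [← Complex.ofReal_inv] at this ⊢
      ring_nf
      ring_nf at this
      rw [show (4:ℕ) = 2*2 by rfl, pow_mul, this]
      norm_num
    fin_cases i <;> fin_cases j <;> fin_cases k <;> fin_cases l
    all_goals simp [e₀, e₁, tau0, tau1, hvu, hvw, hc1def, star_mul',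
          Complex.star_def, Complex.conj_ofReal, Complex.ofReal_div, Complex.ofReal_add,
          Complex.ofReal_sub, Complex.ofReal_one, hc4, -Complex.ofReal_cos, -Complex.ofReal_sin]
    all_goals ring_nf
    all_goals try simp only [hc4]
    all_goals try ring
    all_goals try linear_combination hpyth/4
    all_goals try linear_combination -hsin/4


end
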